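/- Let n > r ≥ 1 be integers and let G be a finite simple undirected graph on a vertex set V of cardinality n. Suppose there is a subset V_c ⊆ V with |V_c| = r such that every vertex of V_c is adjacent (in G) to every other vertex of V (i.e., each vertex of V_c is adjacent to every vertex in V_c \ {itself} and to every vertex in V \ V_c). Then G is (r,r')-redundant for every integer r' with 0 ≤ r' < r. -/

import Mathlib

variable {V : Type*} [Fintype V] [DecidableEq V]

/-- `|B_i ∩ N_j| = |B_j ∩ N_i|` for distinct `i`, `j`, where `N_i` is the
neighborhood of `i` and `B_i = N_i ∪ {i}`. -/
lemma card_extNbhd_inter_comm (G : SimpleGraph V) [DecidableRel G.Adj] {i j : V}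
    (_h : i ≠ j) :
    (insert i (G.neighborFinset i) ∩ G.neighborFinset j).card =
      (insert j (G.neighborFinset j) ∩ G.neighborFinset i).card := by
  by_cases hadj : G.Adj i j
  · have hi : i ∈ G.neighborFinset j := by
      simpa [SimpleGraph.mem_neighborFinset] using hadj.symm
    have hj : j ∈ G.neighborFinset i := by
      simpa [SimpleGraph.mem_neighborFinset] using hadj
    rw [Finset.insert_inter_of_mem hi, Finset.insert_inter_of_mem hj,
      Finset.card_insert_of_notMem (by simp),
      Finset.card_insert_of_notMem (by simp),
      Finset.inter_comm]
  · have hi : i ∉ G.neighborFinset j := by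
      simp only [SimpleGraph.mem_neighborFinset]
      exact fun hc => hadj hc.symm
    have hj : j ∉ G.neighborFinset i := by
      simp only [SimpleGraph.mem_neighborFinset]
      exact hadj
    rw [Finset.insert_inter_of_notMem hi, Finset.insert_inter_of_notMem hj,
      Finset.inter_comm]

/-- The `r`-2-hop graph of `G`: distinct vertices `i`, `j` are adjacent iff
`|B_i ∩ N_j| ≥ r`. -/
def twoHopGraph (G : SimpleGraph V) [DecidableRel G.Adj] (r : ℕ) : SimpleGraph V where
  Adj i j := i ≠ j ∧ r ≤ (insert i (G.neighborFinset i) ∩ G.neighborFinset j).card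
  symm := by
    refine ⟨fun i j hij => ?_⟩
    exact ⟨hij.1.symm, (card_extNbhd_inter_comm G hij.1) ▸ hij.2⟩
  loopless := ⟨fun i h => h.1 rfl⟩

/-- `G` is `(r, r')`-redundant: its `r`-2-hop graph is connected, and any two
distinct vertices not adjacent in the `r`-2-hop graph satisfy `|B_i ∩ N_j| ≤ r'`. -/
def IsRedundant (G : SimpleGraph V) [DecidableRel G.Adj] (r r' : ℕ) : Prop :=
  (twoHopGraph G r).Connected ∧
    ∀ i j : V, i ≠ j → ¬ (twoHopGraph G r).Adj i j →
      (insert i (G.neighborFinset i) ∩ G.neighborFinset j).card ≤ r'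


/-!
STATEMENT 3: Let n > r ≥ 1 and let G be a graph on a vertex set V with |V| = n.
Suppose there is V_c ⊆ V with |V_c| = r such that every vertex of V_c is adjacent
to every other vertex of V.  Then G is (r,r')-redundant for every 0 ≤ r' < r.
-/

theorem isRedundant_of_core (G : SimpleGraph V) [DecidableRel G.Adj]
    (n r : ℕ) (hr : 1 ≤ r) (hrn : r < n) (hcard : Fintype.card V = n)
    (Vc : Finset V) (hVc : Vc.card = r)
    (hadj : ∀ i ∈ Vc, ∀ j : V, j ≠ i → G.Adj i j) :
    ∀ r' : ℕ, r' < r → IsRedundant G r r' := by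
  intro r' _
  -- key claim: all distinct pairs are adjacent in the 2-hop graph
  have key : ∀ i j : V, i ≠ j →
      r ≤ (insert i (G.neighborFinset i) ∩ G.neighborFinset j).card := by
    intro i j hij
    by_cases hjVc : j ∈ Vc
    · -- find the subset S ⊆ B_i ∩ N_j of size ≥ r
      by_cases hiVc : i ∈ Vc
      · obtain ⟨w, hw⟩ : ∃ w, w ∉ Vc := by
          by_contra h
          push_neg at h
          have : Vc = Finset.univ := Finset.eq_univ_iff_forall.mpr h
          rw [this, Finset.card_univ, hcard] at hVc
          omega
        have hsub : (insert w Vc).erase j ⊆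
            insert i (G.neighborFinset i) ∩ G.neighborFinset j := by
          intro v hv
          rw [Finset.mem_erase, Finset.mem_insert] at hv
          obtain ⟨hvj, hv⟩ := hv
          have hvNj : v ∈ G.neighborFinset j := by
            rw [SimpleGraph.mem_neighborFinset]
            exact hadj j hjVc v hvj
          rcases hv with rfl | hvVc
          · refine Finset.mem_inter.mpr ⟨?_, hvNj⟩
            have hvi : v ≠ i := fun h => hw (h ▸ hiVc)
            exact Finset.mem_insert.mpr (Or.inr (by
              rw [SimpleGraph.mem_neighborFinset]
              exact hadj i hiVc v hvi))
          · refine Finset.mem_inter.mpr ⟨?_, hvNj⟩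
            by_cases hvi : v = i
            · exact Finset.mem_insert.mpr (Or.inl hvi)
            · exact Finset.mem_insert.mpr (Or.inr (by
                rw [SimpleGraph.mem_neighborFinset]
                exact (hadj v hvVc i (Ne.symm hvi)).symm))
        calc r = ((insert w Vc).erase j).card := by
                rw [Finset.card_erase_of_mem (Finset.mem_insert.mpr (Or.inr hjVc)),
                  Finset.card_insert_of_notMem hw, hVc]; omega
          _ ≤ _ := Finset.card_le_card hsub
      · have hsub : (insert i Vc).erase j ⊆
            insert i (G.neighborFinset i) ∩ G.neighborFinset j := by
          intro v hv
          rw [Finset.mem_erase, Finset.mem_insert] at hv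
          obtain ⟨hvj, hv⟩ := hv
          have hvNj : v ∈ G.neighborFinset j := by
            rw [SimpleGraph.mem_neighborFinset]
            exact hadj j hjVc v hvj
          rcases hv with rfl | hvVc
          · exact Finset.mem_inter.mpr ⟨Finset.mem_insert_self _ _, hvNj⟩
          · have hvi : v ≠ i := fun h => hiVc (h ▸ hvVc)
            refine Finset.mem_inter.mpr ⟨Finset.mem_insert.mpr (Or.inr ?_), hvNj⟩
            rw [SimpleGraph.mem_neighborFinset]
            exact (hadj v hvVc i (Ne.symm hvi)).symm
        have hiVc' : i ∉ Vc := hiVc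
        calc r ≤ ((insert i Vc).erase j).card := by
                rw [Finset.card_erase_of_mem (Finset.mem_insert.mpr (Or.inr hjVc)),
                  Finset.card_insert_of_notMem hiVc', hVc]; omega
          _ ≤ _ := Finset.card_le_card hsub
    · -- j ∉ Vc : Vc itself is contained in B_i ∩ N_j
      have hsub : Vc ⊆ insert i (G.neighborFinset i) ∩ G.neighborFinset j := by
        intro v hvVc
        have hvj : j ≠ v := fun h => hjVc (h ▸ hvVc)
        have hvNj : v ∈ G.neighborFinset j := by
          rw [SimpleGraph.mem_neighborFinset]
          exact (hadj v hvVc j hvj).symm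
        by_cases hvi : v = i
        · exact Finset.mem_inter.mpr ⟨Finset.mem_insert.mpr (Or.inl hvi), hvNj⟩
        · refine Finset.mem_inter.mpr ⟨Finset.mem_insert.mpr (Or.inr ?_), hvNj⟩
          rw [SimpleGraph.mem_neighborFinset]
          exact (hadj v hvVc i (Ne.symm hvi)).symm
      calc r = Vc.card := hVc.symm
        _ ≤ _ := Finset.card_le_card hsub
  have hAdj : ∀ i j : V, i ≠ j → (twoHopGraph G r).Adj i j :=
    fun i j hij => ⟨hij, key i j hij⟩
  constructor
  · have hne : Nonempty V := by
      rw [← Fintype.card_pos_iff, hcard]; omega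
    refine ⟨fun i j => ?_⟩
    by_cases hij : i = j
    · exact hij ▸ SimpleGraph.Reachable.refl i
    · exact (hAdj i j hij).reachable
  · intro i j hij hnadj
    exact absurd (hAdj i j hij) hnadj
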